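/- Let g be C¹ near 0, g(0)=0, g'(0)=ν²>0, and suppose the Urabe condition g(x)=λ·X(x)/(1+h(X(x))) holds for some λ>0 and some odd continuous function h with h(0)=0, where X²=2G, xX>0 for x≠0. Then ν=λ, i.e. necessarily g'(0)=λ². -/

import Mathlib

open Set Filter
open Topology

theorem stmt_14 (ε ν lam : ℝ) (hε : 0 < ε) (hν : 0 < ν) (hlam : 0 < lam)
    (g G X h : ℝ → ℝ)
    (hg : ContDiffOn ℝ 1 g (Ioo (-ε) ε))
    (hg0 : g 0 = 0) (hg'0 : deriv g 0 = ν ^ 2)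
    (hG : ∀ x, G x = ∫ u in (0:ℝ)..x, g u)
    (hXcont : ∀ᶠ x in nhds (0:ℝ), ContinuousAt X x)
    (hX2 : ∀ᶠ x in nhds (0:ℝ), (X x) ^ 2 = 2 * G x)
    (hXsgn : ∀ᶠ x in nhds (0:ℝ), x ≠ 0 → 0 < x * X x)
    (hhcont : ∀ᶠ s in nhds (0:ℝ), ContinuousAt h s)
    (hhodd : ∀ᶠ s in nhds (0:ℝ), h (-s) = -h s)
    (hUrabe : ∀ᶠ x in nhds (0:ℝ), g x = lam * X x / (1 + h (X x))) :
    ν = lam := by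
  have hIoo : Ioo (-ε) ε ∈ 𝓝 (0:ℝ) := Ioo_mem_nhds (by linarith) hε
  have hgc : ContinuousOn g (Ioo (-ε) ε) := hg.continuousOn
  -- continuity of g at points of Ioo
  have hgca : ∀ x ∈ Ioo (-ε) ε, ContinuousAt g x := fun x hx =>
    hgc.continuousAt (isOpen_Ioo.mem_nhds hx)
  -- G derivative
  have hGfun : G = fun x => ∫ u in (0:ℝ)..x, g u := funext hG
  have hGderiv : ∀ x ∈ Ioo (-ε) ε, HasDerivAt G (g x) x := by
    intro x hx
    rw [hGfun]
    have hsub : uIcc (0:ℝ) x ⊆ Ioo (-ε) ε := by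
      exact Set.ordConnected_Ioo.uIcc_subset (by constructor <;> linarith) hx
    exact intervalIntegral.integral_hasDerivAt_right
      ((hgc.mono hsub).intervalIntegrable)
      (hgc.stronglyMeasurableAtFilter isOpen_Ioo x hx) (hgca x hx)
  -- g 0 basic facts
  have hG0 : G 0 = 0 := by rw [hG]; simp
  have hX0 : X 0 = 0 := by
    have h2 := hX2.self_of_nhds
    have : X 0 ^ 2 = 0 := by rw [h2, hG0]; ring
    exact (pow_eq_zero_iff (by norm_num : (2:ℕ) ≠ 0)).mp this
  have hh0 : h 0 = 0 := by
    have := hhodd.self_of_nhds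
    simp only [neg_zero] at this
    linarith
  -- slope limit: g x / x → ν²
  have hgdiff : DifferentiableAt ℝ g 0 :=
    (hg.contDiffAt hIoo).differentiableAt one_ne_zero
  have hgd : HasDerivAt g (ν ^ 2) 0 := hg'0 ▸ hgdiff.hasDerivAt
  have hslope : Tendsto (fun x => g x / x) (𝓝[≠] (0:ℝ)) (𝓝 (ν ^ 2)) := by
    have := hasDerivAt_iff_tendsto_slope.mp hgd
    refine this.congr' ?_
    filter_upwards with x
    simp [slope, hg0, div_eq_inv_mul]
  -- L'Hôpital: 2*G x / x² → ν²
  have hLH : Tendsto (fun x => 2 * G x / x ^ 2) (𝓝[≠] (0:ℝ)) (𝓝 (ν ^ 2)) := by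
    apply HasDerivAt.lhopital_zero_nhdsNE (f' := fun x => 2 * g x) (g' := fun x => 2 * x)
    · filter_upwards [eventually_nhdsWithin_of_eventually_nhds
        (eventually_mem_nhds_iff.mpr hIoo)] with x hx
      exact ((hGderiv x (mem_of_mem_nhds hx)).const_mul 2)
    · filter_upwards with x
      simpa using (hasDerivAt_pow 2 x)
    · filter_upwards [self_mem_nhdsWithin] with x hx
      exact mul_ne_zero two_ne_zero hx
    · have : ContinuousAt (fun x => 2 * G x) 0 := by
        exact ((hGderiv 0 (mem_of_mem_nhds hIoo)).continuousAt).const_mul 2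
      have := this.tendsto
      rw [hG0] at this
      simpa using this.mono_left nhdsWithin_le_nhds
    · have : Tendsto (fun x : ℝ => x ^ 2) (𝓝 0) (𝓝 (0 ^ 2)) :=
        (continuous_pow 2).continuousAt
      simpa using this.mono_left nhdsWithin_le_nhds
    · refine hslope.congr' ?_
      filter_upwards [self_mem_nhdsWithin] with x hx
      rw [mul_div_mul_left _ _ (two_ne_zero)]
  -- X x / x → ν
  have hXx : Tendsto (fun x => X x / x) (𝓝[≠] (0:ℝ)) (𝓝 ν) := by
    have hsq : Tendsto (fun x => Real.sqrt (2 * G x / x ^ 2)) (𝓝[≠] (0:ℝ))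
        (𝓝 (Real.sqrt (ν ^ 2))) :=
      (Real.continuous_sqrt.continuousAt.tendsto.comp hLH)
    rw [Real.sqrt_sq hν.le] at hsq
    refine hsq.congr' ?_
    filter_upwards [eventually_nhdsWithin_of_eventually_nhds hX2,
      eventually_nhdsWithin_of_eventually_nhds hXsgn, self_mem_nhdsWithin]
      with x h2 hsgn hx
    have hx' : (x : ℝ) ≠ 0 := hx
    have hxX : 0 < x * X x := hsgn hx
    have hx2 : 0 < x ^ 2 := lt_of_le_of_ne (sq_nonneg x) (Ne.symm (pow_ne_zero 2 hx'))
    have hq : 0 < X x / x := by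
      have hrw : X x / x = (x * X x) / x ^ 2 := by
        field_simp
      rw [hrw]
      exact div_pos hxX hx2
    have : (X x / x) ^ 2 = 2 * G x / x ^ 2 := by
      rw [div_pow, h2]
    rw [← this, Real.sqrt_sq hq.le]
  -- X x ≠ 0 for x ≠ 0 near 0
  have hne : ∀ᶠ x in 𝓝[≠] (0:ℝ), X x ≠ 0 := by
    filter_upwards [eventually_nhdsWithin_of_eventually_nhds hXsgn,
      self_mem_nhdsWithin] with x hsgn hx
    intro h0
    have := hsgn hx
    rw [h0, mul_zero] at this
    exact lt_irrefl 0 this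
  -- g x / X x → ν
  have hT1 : Tendsto (fun x => g x / X x) (𝓝[≠] (0:ℝ)) (𝓝 ν) := by
    have hdiv := hslope.div hXx hν.ne'
    have hval : ν ^ 2 / ν = ν := by
      rw [sq, mul_div_assoc, div_self hν.ne', mul_one]
    rw [hval] at hdiv
    refine hdiv.congr' ?_
    filter_upwards [self_mem_nhdsWithin, hne] with x hx hXne
    have hx' : (x : ℝ) ≠ 0 := hx
    show g x / x / (X x / x) = g x / X x
    field_simp
  -- g x / X x → lam
  have hX0cont : ContinuousAt X 0 := hXcont.self_of_nhds
  have hhc : ContinuousAt h (X 0) := by rw [hX0]; exact hhcont.self_of_nhds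
  have hcomp : ContinuousAt (fun x => lam / (1 + h (X x))) 0 := by
    apply ContinuousAt.div continuousAt_const
    · exact continuousAt_const.add (hhc.comp hX0cont)
    · simp [hX0, hh0]
  have hT2 : Tendsto (fun x => g x / X x) (𝓝[≠] (0:ℝ)) (𝓝 lam) := by
    have := hcomp.tendsto
    simp only [hX0, hh0, add_zero, div_one] at this
    refine (this.mono_left nhdsWithin_le_nhds).congr' ?_
    filter_upwards [eventually_nhdsWithin_of_eventually_nhds hUrabe, hne] with x hU hXne
    rw [hU, mul_div_right_comm, mul_div_assoc, div_self hXne, mul_one]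
  exact tendsto_nhds_unique hT1 hT2
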